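/- The quadridiagonal univariate Laguerre production matrix P, with entries p_{n,n+1} = 1, p_{n,n} = (2n+λ)+x, p_{n,n-1} = n(n-1+λ)+2nx, p_{n,n-2} = n(n-1)x, and zero otherwise, factors as P = L·(L·U_x + λI), where L is the lower-bidiagonal matrix with 1 on the diagonal and 1,2,3,... on the subdiagonal, and U_x is the upper-bidiagonal matrix with 1 on the superdiagonal and x on the diagonal. Consequently P is totally positive in ℤ[x,λ] with the coefficientwise order. -/

import Mathlib

/-- Row-finite infinite matrices: each row is a finitely supported function. -/
def RFMat (R : Type*) [Zero R] := ℕ → (ℕ →₀ R)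

namespace RFMat

variable {R : Type*} [CommRing R]

/-- Matrix product of row-finite matrices: `(P*Q)_{ik} = ∑_j P_{ij} Q_{jk}`. -/
noncomputable def mul (P Q : RFMat R) : RFMat R :=
  fun i => (P i).sum fun j a => a • Q j

end RFMat

/-- The ring `ℤ[x,λ]`. -/
abbrev Rxl : Type := MvPolynomial (Fin 2) ℤ

/-- The indeterminate `x`. -/
noncomputable def xv : Rxl := MvPolynomial.X 0

/-- The indeterminate `λ`. -/
noncomputable def lv : Rxl := MvPolynomial.X 1

/-- The quadridiagonal univariate Laguerre production matrix `P` over `ℤ[x,λ]`: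
`p_{n,n+1} = 1`, `p_{n,n} = (2n+λ)+x`, `p_{n,n-1} = n(n-1+λ)+2nx`,
`p_{n,n-2} = n(n-1)x`. -/
noncomputable def Pquad : RFMat Rxl :=
  fun n => Finsupp.single (n + 1) 1
    + Finsupp.single n (2 * (n : Rxl) + lv + xv)
    + Finsupp.single (n - 1) ((n : Rxl) * ((n : Rxl) - 1 + lv) + 2 * (n : Rxl) * xv)
    + Finsupp.single (n - 2) ((n : Rxl) * ((n : Rxl) - 1) * xv)

/-- The lower-bidiagonal matrix `L` with `1` on the diagonal and `1,2,3,…` on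
the subdiagonal. -/
noncomputable def Lmat : RFMat Rxl :=
  fun n => Finsupp.single n 1 + Finsupp.single (n - 1) (n : Rxl)

/-- The upper-bidiagonal matrix `U_x` with `1` on the superdiagonal and `x` on
the diagonal. -/
noncomputable def Uxmat : RFMat Rxl :=
  fun n => Finsupp.single (n + 1) 1 + Finsupp.single n xv

/-- coefficientwise nonnegative -/
def NN (f : Rxl) : Prop := ∀ d, 0 ≤ MvPolynomial.coeff d f

lemma NN_zero : NN 0 := fun d => by simp
lemma NN_one : NN 1 := fun d => by
  classical
  simp [MvPolynomial.coeff_one]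
  split <;> norm_num

lemma NN_add {f g : Rxl} (hf : NN f) (hg : NN g) : NN (f + g) := fun d => by
  rw [MvPolynomial.coeff_add]; exact add_nonneg (hf d) (hg d)

lemma NN_mul {f g : Rxl} (hf : NN f) (hg : NN g) : NN (f * g) := fun d => by
  classical
  rw [MvPolynomial.coeff_mul]
  exact Finset.sum_nonneg fun p _ => mul_nonneg (hf p.1) (hg p.2)

lemma NN_natCast (n : ℕ) : NN (n : Rxl) := fun d => by
  classical
  rw [show ((n : Rxl)) = MvPolynomial.C (n : ℤ) from (map_natCast MvPolynomial.C n).symm]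
  rw [MvPolynomial.coeff_C]
  split <;> positivity

lemma NN_X (i : Fin 2) : NN (MvPolynomial.X i : Rxl) := fun d => by
  classical
  rw [MvPolynomial.coeff_X']
  split <;> norm_num

lemma NN_xv : NN xv := NN_X 0
lemma NN_lv : NN lv := NN_X 1

lemma NN_sum {ι : Type*} (s : Finset ι) (f : ι → Rxl) (h : ∀ i ∈ s, NN (f i)) :
    NN (∑ i ∈ s, f i) := by
  classical
  induction s using Finset.induction_on with
  | empty => simpa using NN_zero
  | insert _ _ hx ih =>
    rw [Finset.sum_insert hx]
    exact NN_add (h _ (Finset.mem_insert_self _ _)) (ih fun i hi => h i (Finset.mem_insert_of_mem hi))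

lemma NN_prod {ι : Type*} (s : Finset ι) (f : ι → Rxl) (h : ∀ i ∈ s, NN (f i)) :
    NN (∏ i ∈ s, f i) := by
  classical
  induction s using Finset.induction_on with
  | empty => simpa using NN_one
  | insert _ _ hx ih =>
    rw [Finset.prod_insert hx]
    exact NN_mul (h _ (Finset.mem_insert_self _ _)) (ih fun i hi => h i (Finset.mem_insert_of_mem hi))

/-- the tridiagonal matrix `T = L·U_x + λ·I` -/
noncomputable def tE (i j : ℕ) : Rxl :=
  if j = i + 1 then 1 else if j = i then xv + lv + (i : Rxl)
    else if i = j + 1 then (i : Rxl) * xv else 0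

lemma NN_tE (i j : ℕ) : NN (tE i j) := by
  unfold tE
  split
  · exact NN_one
  · split
    · exact NN_add (NN_add NN_xv NN_lv) (NN_natCast i)
    · split
      · exact NN_mul (NN_natCast i) NN_xv
      · exact NN_zero

lemma tE_zero_lt {i j : ℕ} (h : i + 2 ≤ j) : tE i j = 0 := by
  unfold tE; split <;> [omega; (split <;> [omega; (split <;> [omega; rfl])])]

lemma tE_zero_gt {i j : ℕ} (h : j + 2 ≤ i) : tE i j = 0 := by
  unfold tE; split <;> [omega; (split <;> [omega; (split <;> [omega; rfl])])]

lemma tE_diag (i : ℕ) : tE i i = xv + lv + (i : Rxl) := by unfold tE; simp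
lemma tE_super (i : ℕ) : tE i (i+1) = 1 := by unfold tE; simp
lemma tE_sub (i : ℕ) : tE (i+1) i = ((i:Rxl)+1) * xv := by
  unfold tE; split
  · omega
  · split
    · omega
    · simp

lemma strictMono_nat_lb {m : ℕ} {r : Fin m → ℕ} (hr : StrictMono r) :
    ∀ (j : ℕ) (h0 : 0 < m) (h : j < m), r ⟨0, h0⟩ + j ≤ r ⟨j, h⟩ := by
  intro j
  induction j with
  | zero => intro h0 h; simp
  | succ j ih =>
    intro h0 h
    have h1 : j < m := by omega
    have := ih h0 h1
    have h2 : r ⟨j, h1⟩ < r ⟨j+1, h⟩ := hr (by simp [Fin.lt_def])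
    omega

/-- generic block-triangular determinant splitting (lower-left block zero) -/
lemma det_block_ll {k l : ℕ} (A : Matrix (Fin (k + l)) (Fin (k + l)) Rxl)
    (h : ∀ (p : Fin l) (q : Fin k),
      A (finSumFinEquiv (Sum.inr p)) (finSumFinEquiv (Sum.inl q)) = 0) :
    A.det =
      (Matrix.of fun p q : Fin k =>
        A (finSumFinEquiv (Sum.inl p)) (finSumFinEquiv (Sum.inl q))).det *
      (Matrix.of fun p q : Fin l =>
        A (finSumFinEquiv (Sum.inr p)) (finSumFinEquiv (Sum.inr q))).det := by
  rw [← Matrix.det_submatrix_equiv_self finSumFinEquiv A]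
  have : A.submatrix finSumFinEquiv finSumFinEquiv =
      Matrix.fromBlocks
        (Matrix.of fun p q : Fin k =>
          A (finSumFinEquiv (Sum.inl p)) (finSumFinEquiv (Sum.inl q)))
        (Matrix.of fun (p : Fin k) (q : Fin l) =>
          A (finSumFinEquiv (Sum.inl p)) (finSumFinEquiv (Sum.inr q)))
        0
        (Matrix.of fun p q : Fin l =>
          A (finSumFinEquiv (Sum.inr p)) (finSumFinEquiv (Sum.inr q))) := by
    refine Matrix.ext fun i j => ?_
    rcases i with i | i <;> rcases j with j | j <;>
      simp only [Matrix.submatrix_apply, Matrix.fromBlocks_apply₁₁, Matrix.fromBlocks_apply₁₂,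
        Matrix.fromBlocks_apply₂₁, Matrix.fromBlocks_apply₂₂, Matrix.of_apply, Matrix.zero_apply]
    exact h i j
  rw [this, Matrix.det_fromBlocks_zero₂₁]

/-- generic block-triangular determinant splitting (upper-right block zero) -/
lemma det_block_ur {k l : ℕ} (A : Matrix (Fin (k + l)) (Fin (k + l)) Rxl)
    (h : ∀ (p : Fin k) (q : Fin l),
      A (finSumFinEquiv (Sum.inl p)) (finSumFinEquiv (Sum.inr q)) = 0) :
    A.det =
      (Matrix.of fun p q : Fin k =>
        A (finSumFinEquiv (Sum.inl p)) (finSumFinEquiv (Sum.inl q))).det *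
      (Matrix.of fun p q : Fin l =>
        A (finSumFinEquiv (Sum.inr p)) (finSumFinEquiv (Sum.inr q))).det := by
  rw [← Matrix.det_submatrix_equiv_self finSumFinEquiv A]
  have : A.submatrix finSumFinEquiv finSumFinEquiv =
      Matrix.fromBlocks
        (Matrix.of fun p q : Fin k =>
          A (finSumFinEquiv (Sum.inl p)) (finSumFinEquiv (Sum.inl q)))
        0
        (Matrix.of fun (p : Fin l) (q : Fin k) =>
          A (finSumFinEquiv (Sum.inr p)) (finSumFinEquiv (Sum.inl q)))
        (Matrix.of fun p q : Fin l =>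
          A (finSumFinEquiv (Sum.inr p)) (finSumFinEquiv (Sum.inr q))) := by
    refine Matrix.ext fun i j => ?_
    rcases i with i | i <;> rcases j with j | j <;>
      simp only [Matrix.submatrix_apply, Matrix.fromBlocks_apply₁₁, Matrix.fromBlocks_apply₁₂,
        Matrix.fromBlocks_apply₂₁, Matrix.fromBlocks_apply₂₂, Matrix.of_apply, Matrix.zero_apply]
    exact h i j
  rw [this, Matrix.det_fromBlocks_zero₁₂]

lemma tE_super' {i j : ℕ} (h : j = i + 1) : tE i j = 1 := by subst h; exact tE_super i
lemma tE_diag' {i j : ℕ} (h : j = i) : tE i j = xv + lv + (i : Rxl) := by subst h; exact tE_diag _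
lemma tE_sub' {i j : ℕ} (h : i = j + 1) : tE i j = (i : Rxl) * xv := by
  subst h; rw [tE_sub]; push_cast; ring

/-- reversed contiguous principal block of `T` of size `m` starting at `n` -/
noncomputable def Er (m n : ℕ) : Rxl :=
  (Matrix.of fun p q : Fin m => tE (n + (m - 1 - (p : ℕ))) (n + (m - 1 - (q : ℕ)))).det

lemma Er_zero (n : ℕ) : Er 0 n = 1 := Matrix.det_fin_zero

lemma Er_one (n : ℕ) : Er 1 n = xv + lv + (n : Rxl) := by
  rw [Er, Matrix.det_fin_one]
  simp [tE_diag]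

lemma Er_rec (m n : ℕ) :
    Er (m + 2) n = (xv + lv + ((n + m + 1 : ℕ) : Rxl)) * Er (m + 1) n
      - ((n + m + 1 : ℕ) : Rxl) * xv * Er m n := by
  set A : Matrix (Fin (m+2)) (Fin (m+2)) Rxl :=
    Matrix.of fun p q : Fin (m+2) =>
      tE (n + (m + 1 - (p : ℕ))) (n + (m + 1 - (q : ℕ))) with hA
  have hEr2 : Er (m + 2) n = A.det := rfl
  have hz : ∀ j : Fin m, A 0 j.succ.succ = 0 := by
    intro j
    simp only [hA, Matrix.of_apply, Fin.val_zero, Fin.val_succ]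
    exact tE_zero_gt (by omega)
  have h00 : A 0 0 = xv + lv + ((n + m + 1 : ℕ) : Rxl) := by
    simp only [hA, Matrix.of_apply, Fin.val_zero, Nat.sub_zero]
    rw [tE_diag' rfl]
    push_cast; ring
  have h01 : A 0 1 = ((n + m + 1 : ℕ) : Rxl) * xv := by
    simp only [hA, Matrix.of_apply, Fin.val_zero, Fin.val_one, Nat.sub_zero]
    rw [show n + (m + 1) = n + m + 1 from by omega, tE_sub' (by omega)]
  have hM0 : (A.submatrix Fin.succ (Fin.succAbove 0)).det = Er (m + 1) n := by
    rw [Er]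
    congr 1
    refine Matrix.ext fun p q => ?_
    simp only [hA, Matrix.submatrix_apply, Matrix.of_apply, Fin.succAbove_zero, Fin.val_succ]
    congr 1 <;> omega
  have hM1 : (A.submatrix Fin.succ (Fin.succAbove 1)).det = Er m n := by
    set M := A.submatrix Fin.succ (Fin.succAbove 1) with hM
    have hsa0 : (1 : Fin (m+2)).succAbove 0 = 0 := rfl
    have hsas : ∀ q : Fin m, (1 : Fin (m+2)).succAbove q.succ = q.succ.succ := by
      intro q
      rw [← Fin.succ_zero_eq_one, Fin.succ_succAbove_succ, Fin.zero_succAbove]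
    rw [Matrix.det_succ_column_zero, Fin.sum_univ_succ]
    have hcol : ∀ i : Fin m, M i.succ 0 = 0 := by
      intro i
      simp only [hM, hA, Matrix.submatrix_apply, Matrix.of_apply, hsa0, Fin.val_zero,
        Fin.val_succ, Nat.sub_zero]
      exact tE_zero_lt (by omega)
    rw [Finset.sum_eq_zero fun i _ => by rw [hcol i]; ring]
    have hm00 : M 0 0 = 1 := by
      simp only [hM, hA, Matrix.submatrix_apply, Matrix.of_apply, hsa0, Fin.val_zero,
        Fin.val_succ, Nat.sub_zero]
      exact tE_super' (by omega)
    have hmm : M.submatrix (Fin.succAbove 0) Fin.succ =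
        Matrix.of fun p q : Fin m => tE (n + (m - 1 - (p : ℕ))) (n + (m - 1 - (q : ℕ))) := by
      refine Matrix.ext fun p q => ?_
      simp only [hM, hA, Matrix.submatrix_apply, Matrix.of_apply, Fin.succAbove_zero, hsas,
        Fin.val_succ]
      congr 1 <;> omega
    rw [hm00, hmm, ← Er]
    simp
  rw [hEr2, Matrix.det_succ_row_zero, Fin.sum_univ_succ, Fin.sum_univ_succ,
    Finset.sum_eq_zero fun j _ => by rw [hz j]; ring]
  rw [show Fin.succ (0 : Fin (m+1)) = (1 : Fin (m+2)) from rfl]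
  rw [h00, h01, hM0, hM1]
  rw [show ((0 : Fin (m+2)) : ℕ) = 0 from rfl, show ((1 : Fin (m+2)) : ℕ) = 1 from rfl]
  ring

lemma NN_Er : ∀ m n : ℕ, NN (Er m n) ∧ NN (Er (m+1) n - xv * Er m n) := by
  intro m
  induction m with
  | zero =>
    intro n
    constructor
    · rw [Er_zero]; exact NN_one
    · rw [Er_one, Er_zero]
      have : xv + lv + (n : Rxl) - xv * 1 = lv + (n : Rxl) := by ring
      rw [this]
      exact NN_add NN_lv (NN_natCast n)
  | succ m ih =>
    intro n
    obtain ⟨h1, h2⟩ := ih n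
    have h3 : NN (Er (m+1) n) := by
      have : Er (m+1) n = xv * Er m n + (Er (m+1) n - xv * Er m n) := by ring
      rw [this]
      exact NN_add (NN_mul NN_xv h1) h2
    refine ⟨h3, ?_⟩
    have : Er (m+2) n - xv * Er (m+1) n
        = (lv + ((n + m + 1 : ℕ) : Rxl)) * (Er (m+1) n - xv * Er m n)
          + lv * xv * Er m n := by
      rw [Er_rec]; ring
    rw [this]
    exact NN_add (NN_mul (NN_add NN_lv (NN_natCast _)) h2) (NN_mul (NN_mul NN_lv NN_xv) h1)

lemma Ec_eq (m n : ℕ) :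
    (Matrix.of fun p q : Fin m => tE (n + (p : ℕ)) (n + (q : ℕ))).det = Er m n := by
  rw [Er, show (Matrix.of fun p q : Fin m =>
      tE (n + (m - 1 - (p : ℕ))) (n + (m - 1 - (q : ℕ))))
      = (Matrix.of fun p q : Fin m =>
          tE (n + (p : ℕ)) (n + (q : ℕ))).submatrix Fin.revPerm Fin.revPerm from ?_,
    Matrix.det_submatrix_equiv_self]
  refine Matrix.ext fun p q => ?_
  simp only [Matrix.submatrix_apply, Matrix.of_apply, Fin.revPerm_apply, Fin.val_rev]
  congr 1 <;> omega

lemma NN_Ec (m n : ℕ) :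
    NN (Matrix.of fun p q : Fin m => tE (n + (p : ℕ)) (n + (q : ℕ))).det := by
  rw [Ec_eq]; exact (NN_Er m n).1

lemma strictMono_lb {m : ℕ} {r : Fin m → ℕ} (hr : StrictMono r) :
    ∀ (d : ℕ) (i j : Fin m), (j : ℕ) = (i : ℕ) + d → r i + d ≤ r j := by
  intro d
  induction d with
  | zero =>
    intro i j h
    have : j = i := Fin.ext (by omega)
    subst this; simp
  | succ d ihd =>
    intro i j h
    have hj' : ((i : ℕ) + d) < m := by omega
    have h1 := ihd i ⟨(i : ℕ) + d, hj'⟩ rfl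
    have h2 : r ⟨(i : ℕ) + d, hj'⟩ < r j := hr (by simp [Fin.lt_def]; omega)
    omega

lemma NN_minor_tE (m : ℕ) : ∀ (r c : Fin m → ℕ), StrictMono r → StrictMono c →
    NN (Matrix.of fun p q : Fin m => tE (r p) (c q)).det := by
  induction m using Nat.strong_induction_on with
  | _ m IH =>
  intro r c hr hc
  rcases m with _ | mm
  · rw [Matrix.det_fin_zero]; exact NN_one
  by_cases hA : c 0 + 2 ≤ r 0
  · rw [Matrix.det_eq_zero_of_column_eq_zero 0 ?_]
    · exact NN_zero
    · intro p
      simp only [Matrix.of_apply]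
      exact tE_zero_gt (by
        have := hr.monotone (Fin.zero_le p)
        omega)
  by_cases hB : r 0 + 2 ≤ c 0
  · rw [Matrix.det_eq_zero_of_row_eq_zero 0 ?_]
    · exact NN_zero
    · intro q
      simp only [Matrix.of_apply]
      exact tE_zero_lt (by
        have := hc.monotone (Fin.zero_le q)
        omega)
  by_cases hC : r 0 = c 0 + 1
  · -- expand along column 0; single entry
    rw [Matrix.det_succ_column_zero]
    rw [Finset.sum_eq_single 0 (fun b _ hb => ?_) (by simp)]
    · have h0 : ((0 : Fin (mm + 1)) : ℕ) = 0 := rfl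
      rw [h0, pow_zero, one_mul]
      refine NN_mul (NN_tE _ _) ?_
      have := IH mm (by omega) (r ∘ Fin.succ) (c ∘ Fin.succ)
        (hr.comp Fin.strictMono_succ) (hc.comp Fin.strictMono_succ)
      rw [Fin.succAbove_zero]
      exact this
    · have : (Matrix.of fun p q : Fin (mm+1) => tE (r p) (c q)) b 0 = 0 := by
        simp only [Matrix.of_apply]
        refine tE_zero_gt ?_
        have : r 0 < r b := hr (by
          rcases Fin.eq_zero_or_eq_succ b with h | ⟨j, rfl⟩
          · exact absurd h hb
          · exact Fin.succ_pos j)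
        omega
      rw [this]; ring
  by_cases hD : c 0 = r 0 + 1
  · rw [Matrix.det_succ_row_zero]
    rw [Finset.sum_eq_single 0 (fun b _ hb => ?_) (by simp)]
    · have h0 : ((0 : Fin (mm + 1)) : ℕ) = 0 := rfl
      rw [h0, pow_zero, one_mul]
      refine NN_mul (NN_tE _ _) ?_
      have := IH mm (by omega) (r ∘ Fin.succ) (c ∘ Fin.succ)
        (hr.comp Fin.strictMono_succ) (hc.comp Fin.strictMono_succ)
      rw [Fin.succAbove_zero]
      exact this
    · have : (Matrix.of fun p q : Fin (mm+1) => tE (r p) (c q)) 0 b = 0 := by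
        simp only [Matrix.of_apply]
        refine tE_zero_lt ?_
        have : c 0 < c b := hc (by
          rcases Fin.eq_zero_or_eq_succ b with h | ⟨j, rfl⟩
          · exact absurd h hb
          · exact Fin.succ_pos j)
        omega
      rw [this]; ring
  -- main case : r 0 = c 0
  have hE : r 0 = c 0 := by omega
  set n := r 0 with hn
  classical
  -- the run predicate
  set Q : ℕ → Prop := fun j => ∀ h : j < mm + 1, ¬ (r ⟨j, h⟩ = n + j ∧ c ⟨j, h⟩ = n + j)
    with hQ
  have hQtop : Q (mm + 1) := fun h => absurd h (by omega)
  set k := Nat.find ⟨mm + 1, hQtop⟩ with hk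
  have hkm : k ≤ mm + 1 := Nat.find_le hQtop
  have hrun : ∀ p : Fin (mm + 1), (p : ℕ) < k → r p = n + p ∧ c p = n + p := by
    intro p hp
    have hmin : ¬ Q (p : ℕ) := Nat.find_min ⟨mm + 1, hQtop⟩ hp
    rw [hQ] at hmin
    by_contra hcon
    exact hmin (fun h => by
      rw [show (⟨(p : ℕ), h⟩ : Fin (mm + 1)) = p from Fin.ext rfl]
      exact hcon)
  have hk0 : 0 < k := by
    rcases Nat.eq_zero_or_pos k with h0 | h; swap
    · exact h
    · exfalso
      have hQk : Q k := Nat.find_spec ⟨mm + 1, hQtop⟩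
      rw [h0, hQ] at hQk
      exact hQk (by omega) (by
        constructor
        · rw [show (⟨0, by omega⟩ : Fin (mm+1)) = 0 from rfl]; omega
        · rw [show (⟨0, by omega⟩ : Fin (mm+1)) = 0 from rfl]; omega)
  by_cases hfull : k = mm + 1
  · -- whole minor is a contiguous principal block
    have : (Matrix.of fun p q : Fin (mm+1) => tE (r p) (c q))
        = Matrix.of fun p q : Fin (mm+1) => tE (n + (p : ℕ)) (n + (q : ℕ)) := by
      refine Matrix.ext fun p q => ?_
      simp only [Matrix.of_apply]
      rw [(hrun p (by omega)).1, (hrun q (by omega)).2]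
    rw [this]
    exact NN_Ec _ _
  -- k < mm + 1
  have hklt : k < mm + 1 := by omega
  have hQk : Q k := Nat.find_spec ⟨mm + 1, hQtop⟩
  have hQk' := hQk hklt
  set kk : Fin (mm + 1) := ⟨k, hklt⟩ with hkk
  have hrk : n + k ≤ r kk := by
    have := strictMono_lb hr k 0 kk (by simp [hkk])
    simpa [hn] using this
  have hck : n + k ≤ c kk := by
    have h0 : c 0 = n := hE.symm
    have := strictMono_lb hc k 0 kk (by simp [hkk])
    omega
  set l := mm + 1 - k with hl
  have hkl : k + l = mm + 1 := by omega
  set e : Fin (k + l) ≃ Fin (mm + 1) := finCongr hkl with he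
  set A : Matrix (Fin (mm+1)) (Fin (mm+1)) Rxl :=
    Matrix.of fun p q : Fin (mm+1) => tE (r p) (c q) with hAdef
  have hdet : A.det = (A.submatrix e e).det :=
    (Matrix.det_submatrix_equiv_self e A).symm
  have hvl : ∀ q : Fin k, ((e (finSumFinEquiv (Sum.inl q))) : ℕ) = (q : ℕ) := by
    intro q; simp [he]
  have hvr : ∀ p : Fin l, ((e (finSumFinEquiv (Sum.inr p))) : ℕ) = k + (p : ℕ) := by
    intro p; simp [he]
  -- strict monotone restrictions for the lower-right block
  have hmono : ∀ p p' : Fin l, p < p' →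
      e (finSumFinEquiv (Sum.inr p)) < e (finSumFinEquiv (Sum.inr p')) := by
    intro p p' hpp
    rw [Fin.lt_def, hvr, hvr]
    have : (p : ℕ) < (p' : ℕ) := hpp
    omega
  have hsmr : StrictMono (fun p : Fin l => r (e (finSumFinEquiv (Sum.inr p)))) :=
    fun p p' hpp => hr (hmono p p' hpp)
  have hsmc : StrictMono (fun p : Fin l => c (e (finSumFinEquiv (Sum.inr p)))) :=
    fun p p' hpp => hc (hmono p p' hpp)
  have hBblock : (Matrix.of fun p q : Fin k =>
      (A.submatrix e e) (finSumFinEquiv (Sum.inl p)) (finSumFinEquiv (Sum.inl q)))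
      = Matrix.of fun p q : Fin k => tE (n + (p : ℕ)) (n + (q : ℕ)) := by
    refine Matrix.ext fun p q => ?_
    simp only [Matrix.of_apply, Matrix.submatrix_apply, hAdef]
    rw [(hrun _ (by rw [hvl]; omega)).1, (hrun _ (by rw [hvl]; omega)).2, hvl, hvl]
  have hDblock : (Matrix.of fun p q : Fin l =>
      (A.submatrix e e) (finSumFinEquiv (Sum.inr p)) (finSumFinEquiv (Sum.inr q)))
      = Matrix.of fun p q : Fin l =>
          tE ((fun p : Fin l => r (e (finSumFinEquiv (Sum.inr p)))) p)
             ((fun p : Fin l => c (e (finSumFinEquiv (Sum.inr p)))) q) := by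
    refine Matrix.ext fun p q => ?_
    simp [Matrix.submatrix_apply, hAdef]
  have hNN_D : NN (Matrix.of fun p q : Fin l =>
      (A.submatrix e e) (finSumFinEquiv (Sum.inr p)) (finSumFinEquiv (Sum.inr q))).det := by
    rw [hDblock]
    exact IH l (by omega) _ _ hsmr hsmc
  have hNN_B : NN (Matrix.of fun p q : Fin k =>
      (A.submatrix e e) (finSumFinEquiv (Sum.inl p)) (finSumFinEquiv (Sum.inl q))).det := by
    rw [hBblock]
    exact NN_Ec _ _
  rcases (by omega : n + k + 1 ≤ r kk ∨ n + k + 1 ≤ c kk) with hbig | hbig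
  · -- rows jump : lower-left block vanishes
    rw [hdet, det_block_ll _ ?_]
    · exact NN_mul hNN_B hNN_D
    · intro p q
      simp only [Matrix.submatrix_apply, hAdef, Matrix.of_apply]
      refine tE_zero_gt ?_
      have h1 : r kk + (p : ℕ) ≤ r (e (finSumFinEquiv (Sum.inr p))) :=
        strictMono_lb hr (p : ℕ) kk _ (by rw [hvr, hkk])
      have h2 : c (e (finSumFinEquiv (Sum.inl q))) = n + (q : ℕ) :=
        (hrun _ (by rw [hvl]; omega)).2
      rw [h2]
      have : (q : ℕ) < k := q.isLt
      omega
  · -- columns jump : upper-right block vanishes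
    rw [hdet, det_block_ur _ ?_]
    · exact NN_mul hNN_B hNN_D
    · intro p q
      simp only [Matrix.submatrix_apply, hAdef, Matrix.of_apply]
      refine tE_zero_lt ?_
      have h1 : c kk + (q : ℕ) ≤ c (e (finSumFinEquiv (Sum.inr q))) :=
        strictMono_lb hc (q : ℕ) kk _ (by rw [hvr, hkk])
      have h2 : r (e (finSumFinEquiv (Sum.inl p))) = n + (p : ℕ) :=
        (hrun _ (by rw [hvl]; omega)).1
      rw [h2]
      have : (p : ℕ) < k := p.isLt
      omega

lemma single_app (a k : ℕ) (v : Rxl) : (Finsupp.single a v) k = if a = k then v else 0 :=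
  Finsupp.single_apply

lemma Pquad_apply (n k : ℕ) : (Pquad n) k = tE n k + (n : Rxl) * tE (n - 1) k := by
  rcases n with _ | _ | nn <;>
  · simp only [Pquad, Finsupp.add_apply, single_app, tE, Nat.cast_zero, Nat.cast_one,
      Nat.cast_ofNat, Nat.add_sub_cancel]
    push_cast
    split_ifs <;> first | (exfalso; omega) | ring

lemma mul_L (Q : RFMat Rxl) (n : ℕ) :
    RFMat.mul Lmat Q n = Q n + (n : Rxl) • Q (n - 1) := by
  show ((Finsupp.single n 1 + Finsupp.single (n - 1) (n : Rxl)).sum fun j a => a • Q j) = _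
  rw [Finsupp.sum_add_index' (fun j => zero_smul Rxl (Q j))
      (fun j a b => add_smul a b (Q j)),
    Finsupp.sum_single_index (zero_smul Rxl (Q n)),
    Finsupp.sum_single_index (zero_smul Rxl (Q (n - 1))), one_smul]

lemma T_apply (n k : ℕ) :
    ((RFMat.mul Lmat Uxmat n + Finsupp.single n lv : ℕ →₀ Rxl)) k = tE n k := by
  rw [Finsupp.add_apply, mul_L]
  rcases n with _ | nn <;>
  · simp only [Uxmat, Finsupp.add_apply, Finsupp.smul_apply, Finsupp.coe_add, Pi.add_apply,
      single_app, smul_eq_mul, tE, Nat.cast_zero, Nat.cast_one, Nat.add_sub_cancel,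
      Nat.sub_zero, Nat.zero_sub]
    push_cast
    split_ifs <;> first | (exfalso; omega) | ring

theorem Pquad_factorization :
    Pquad = RFMat.mul Lmat (fun n => RFMat.mul Lmat Uxmat n + Finsupp.single n lv) := by
  funext n
  apply Finsupp.ext
  intro k
  erw [mul_L]
  rw [Finsupp.add_apply, Finsupp.smul_apply, smul_eq_mul, T_apply, T_apply, Pquad_apply]

theorem Pquad_minors_NN (m : ℕ) (rr cc : Fin m → ℕ) (hrr : StrictMono rr)
    (hcc : StrictMono cc) :
    NN (Matrix.det (Matrix.of fun p q : Fin m => Pquad (rr p) (cc q))) := by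
  classical
  set u : Fin m → (Fin m → Rxl) := fun p q => tE (rr p) (cc q) with hu
  set w : Fin m → (Fin m → Rxl) := fun p q => tE (rr p - 1) (cc q) with hw
  set cf : Fin m → Rxl := fun p => (rr p : Rxl) with hcf
  set v : Fin m → (Fin m → Rxl) := fun p => cf p • w p with hv
  have hM : (Matrix.of fun p q : Fin m => Pquad (rr p) (cc q)) = v + u := by
    funext p q
    simp only [Matrix.of_apply, Pi.add_apply, hv, hu, hw, hcf, Pi.smul_apply, smul_eq_mul]
    rw [Pquad_apply]
    ring
  rw [hM]
  have hdd : Matrix.det (v + u : Matrix (Fin m) (Fin m) Rxl)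
      = (Matrix.detRowAlternating (R := Rxl) (n := Fin m)).toMultilinearMap (v + u) := rfl
  rw [hdd, MultilinearMap.map_add_univ]
  refine NN_sum _ _ fun s _ => ?_
  have hpw : s.piecewise v u =
      s.piecewise (fun i => cf i • (s.piecewise w u) i) (s.piecewise w u) := by
    funext p
    by_cases hp : p ∈ s
    · rw [Finset.piecewise_eq_of_mem _ _ _ hp, Finset.piecewise_eq_of_mem _ _ _ hp,
        Finset.piecewise_eq_of_mem _ _ _ hp]
    · rw [Finset.piecewise_eq_of_notMem _ _ _ hp, Finset.piecewise_eq_of_notMem _ _ _ hp,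
        Finset.piecewise_eq_of_notMem _ _ _ hp]
  rw [hpw, MultilinearMap.map_piecewise_smul]
  set ρ : Fin m → ℕ := fun p => if p ∈ s then rr p - 1 else rr p with hρ
  have hρw : s.piecewise w u = fun p q => tE (ρ p) (cc q) := by
    funext p q
    by_cases hp : p ∈ s
    · rw [Finset.piecewise_eq_of_mem _ _ _ hp, hρ]
      simp [hw, hp]
    · rw [Finset.piecewise_eq_of_notMem _ _ _ hp, hρ]
      simp [hu, hp]
  rw [hρw, smul_eq_mul]
  have hdet : (Matrix.detRowAlternating (R := Rxl) (n := Fin m)).toMultilinearMap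
      (fun p q => tE (ρ p) (cc q))
      = (Matrix.of fun p q : Fin m => tE (ρ p) (cc q)).det := rfl
  rw [hdet]
  by_cases h0 : ∃ p ∈ s, rr p = 0
  · obtain ⟨p, hp, hp0⟩ := h0
    have : (∏ i ∈ s, cf i) = 0 := Finset.prod_eq_zero hp (by simp [hcf, hp0])
    rw [this, zero_mul]
    exact NN_zero
  · push_neg at h0
    by_cases hinj : Function.Injective ρ
    · have hsm : StrictMono ρ := by
        intro p q hpq
        have hle1 : ρ p ≤ rr p := by
          by_cases hp : p ∈ s
          · simp only [hρ, if_pos hp]; omega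
          · simp only [hρ, if_neg hp]; omega
        have hlt : rr p < rr q := hrr hpq
        have hle2 : rr p ≤ ρ q := by
          by_cases hq : q ∈ s
          · have := h0 q hq; simp only [hρ, if_pos hq]; omega
          · simp only [hρ, if_neg hq]; omega
        have hne : ρ p ≠ ρ q := fun hcon => absurd (hinj hcon) (ne_of_lt hpq)
        omega
      exact NN_mul (NN_prod _ _ fun p _ => NN_natCast _) (NN_minor_tE m ρ cc hsm hcc)
    · rw [Function.not_injective_iff] at hinj
      obtain ⟨p, q, hpq, hne⟩ := hinj
      have : (Matrix.of fun p q : Fin m => tE (ρ p) (cc q)).det = 0 := by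
        refine Matrix.det_zero_of_row_eq hne ?_
        funext q'
        simp only [Matrix.of_apply, hpq]
      rw [this, mul_zero]
      exact NN_zero

/-- `P = L·(L·U_x + λI)`, and consequently `P` is totally
positive in `ℤ[x,λ]` with the coefficientwise order: every minor is a
polynomial in `x, λ` with nonnegative coefficients. -/
theorem Pquad_factorization_and_totally_positive :
    Pquad = RFMat.mul Lmat (fun n => RFMat.mul Lmat Uxmat n + Finsupp.single n lv) ∧
    (∀ (m : ℕ) (rr cc : Fin m → ℕ), StrictMono rr → StrictMono cc →
      ∀ d : Fin 2 →₀ ℕ,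
        0 ≤ MvPolynomial.coeff d
          (Matrix.det (Matrix.of fun p q : Fin m => Pquad (rr p) (cc q)))) := by
  exact ⟨Pquad_factorization, fun m rr cc hrr hcc d => Pquad_minors_NN m rr cc hrr hcc d⟩
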